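/- The misère quotient monoid of the Partizan Kayles universe is isomorphic to the group of integers under addition: the map sending a position with k strips of length ≡ 1 (mod 3) and j strips of length ≡ 2 (mod 3) to k − j ∈ ℤ induces a bijection between equivalence classes (modulo the Kayles universe) and ℤ, and is additive with respect to disjunctive sum. -/

import Mathlib

/-- Add a strip of length `k` to a position (strips of length 0 are discarded). -/
def addStrip (m : Multiset ℕ) (k : ℕ) : Multiset ℕ := if k = 0 then m else k ::ₘ m

/-- Left removes one square from a strip of length `n ≥ 1`, leaving strips `i` and `n-1-i`. -/
def LeftMove (G G' : Multiset ℕ) : Prop :=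
  ∃ n ∈ G, ∃ i, i + 1 ≤ n ∧ G' = addStrip (addStrip (G.erase n) i) (n - 1 - i)

/-- Right removes two adjacent squares from a strip of length `n ≥ 2`, leaving `i` and `n-2-i`. -/
def RightMove (G G' : Multiset ℕ) : Prop :=
  ∃ n ∈ G, ∃ i, i + 2 ≤ n ∧ G' = addStrip (addStrip (G.erase n) i) (n - 2 - i)

mutual
  /-- Misère play: Left, to move, wins (a player unable to move wins). -/
  inductive LeftWinsMover : Multiset ℕ → Prop
    | cannot (G : Multiset ℕ) : (¬ ∃ G', LeftMove G G') → LeftWinsMover G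
    | move (G G' : Multiset ℕ) : LeftMove G G' → LeftWinsWaiter G' → LeftWinsMover G
  /-- Misère play: Left wins with Right to move. -/
  inductive LeftWinsWaiter : Multiset ℕ → Prop
    | intro (G : Multiset ℕ) : (∃ G', RightMove G G') →
        (∀ G', RightMove G G' → LeftWinsMover G') → LeftWinsWaiter G
end

inductive Outcome | L | N | P | R
  deriving DecidableEq

open Classical in
/-- The misère outcome `o⁻(G)`. -/
noncomputable def outcome (G : Multiset ℕ) : Outcome :=
  if LeftWinsMover G then (if LeftWinsWaiter G then Outcome.L else Outcome.N)
  else (if LeftWinsWaiter G then Outcome.P else Outcome.R)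

/-- The partial order on outcomes: `L` greatest, `R` least, `N` and `P` incomparable. -/
def Outcome.le (a b : Outcome) : Prop := a = b ∨ a = Outcome.R ∨ b = Outcome.L

/-- `pos k j` is the position `kS₁ + jS₂`. -/
def pos (k j : ℕ) : Multiset ℕ := Multiset.replicate k 1 + Multiset.replicate j 2

/-- The map sending a position to (number of strips ≡ 1 mod 3) − (number of strips ≡ 2 mod 3). -/
def kaylesPhi (G : Multiset ℕ) : ℤ :=
  ((G.filter (fun m => m % 3 = 1)).card : ℤ) - ((G.filter (fun m => m % 3 = 2)).card : ℤ)


namespace KaylesAux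

def c (n : ℕ) : ℤ := if n % 3 = 1 then 1 else if n % 3 = 2 then -1 else 0

def phi (G : Multiset ℕ) : ℤ := (G.map c).sum

lemma phi_cons (a : ℕ) (s : Multiset ℕ) : phi (a ::ₘ s) = c a + phi s := by
  simp [phi]

lemma phi_add (G H : Multiset ℕ) : phi (G + H) = phi G + phi H := by
  simp [phi]

lemma kaylesPhi_eq (G : Multiset ℕ) : kaylesPhi G = phi G := by
  induction G using Multiset.induction with
  | empty => simp [kaylesPhi, phi]
  | cons a s ih =>
      rw [phi_cons, ← ih]
      unfold kaylesPhi c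
      rw [Multiset.filter_cons, Multiset.filter_cons, Multiset.card_add, Multiset.card_add]
      split_ifs with h1 h2 <;> simp [h1] <;> push_cast <;> omega

lemma c_bound (n : ℕ) : -1 ≤ c n ∧ c n ≤ 1 := by
  unfold c; split_ifs <;> omega

lemma c_mod (n : ℕ) : (3:ℤ) ∣ c n - n := by
  unfold c; split_ifs <;> omega

lemma phi_addStrip (m : Multiset ℕ) (k : ℕ) : phi (addStrip m k) = phi m + c k := by
  unfold addStrip
  split_ifs with h
  · subst h; simp [c]
  · rw [phi_cons]; ring

lemma sum_addStrip (m : Multiset ℕ) (k : ℕ) : (addStrip m k).sum = m.sum + k := by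
  unfold addStrip
  split_ifs with h
  · omega
  · rw [Multiset.sum_cons]; omega

lemma notmem_addStrip {m : Multiset ℕ} (h : 0 ∉ m) (k : ℕ) : 0 ∉ addStrip m k := by
  unfold addStrip
  split_ifs with hk
  · exact h
  · rw [Multiset.mem_cons]; rintro (h'|h')
    · exact hk h'.symm
    · exact h h'

lemma sum_erase {G : Multiset ℕ} {n : ℕ} (hn : n ∈ G) : G.sum = n + (G.erase n).sum := by
  conv_lhs => rw [← Multiset.cons_erase hn]
  rw [Multiset.sum_cons]

lemma phi_erase {G : Multiset ℕ} {n : ℕ} (hn : n ∈ G) : phi G = c n + phi (G.erase n) := by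
  conv_lhs => rw [← Multiset.cons_erase hn]
  rw [phi_cons]


/-- Properties of an arbitrary Left move. -/
lemma leftMove_spec {G G' : Multiset ℕ} (h0 : 0 ∉ G) (h : LeftMove G G') :
    0 ∉ G' ∧ G'.sum + 1 = G.sum ∧ (phi G' = phi G - 1 ∨ phi G' = phi G + 2) := by
  obtain ⟨n, hn, i, hi, rfl⟩ := h
  have he0 : 0 ∉ G.erase n := fun h => h0 (Multiset.mem_of_mem_erase h)
  refine ⟨notmem_addStrip (notmem_addStrip he0 i) _, ?_, ?_⟩
  · rw [sum_addStrip, sum_addStrip]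
    have := sum_erase hn
    omega
  · rw [phi_addStrip, phi_addStrip]
    have h1 := phi_erase hn
    have b1 := c_bound i; have b2 := c_bound (n - 1 - i); have b3 := c_bound n
    have m1 := c_mod i; have m2 := c_mod (n - 1 - i); have m3 := c_mod n
    omega

/-- Properties of an arbitrary Right move. -/
lemma rightMove_spec {G G' : Multiset ℕ} (h0 : 0 ∉ G) (h : RightMove G G') :
    0 ∉ G' ∧ G'.sum + 2 = G.sum ∧ (phi G' = phi G - 2 ∨ phi G' = phi G + 1) := by
  obtain ⟨n, hn, i, hi, rfl⟩ := h
  have he0 : 0 ∉ G.erase n := fun h => h0 (Multiset.mem_of_mem_erase h)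
  refine ⟨notmem_addStrip (notmem_addStrip he0 i) _, ?_, ?_⟩
  · rw [sum_addStrip, sum_addStrip]
    have := sum_erase hn
    omega
  · rw [phi_addStrip, phi_addStrip]
    have h1 := phi_erase hn
    have b1 := c_bound i; have b2 := c_bound (n - 2 - i); have b3 := c_bound n
    have m1 := c_mod i; have m2 := c_mod (n - 2 - i); have m3 := c_mod n
    omega

/-- A generic Left move with its phi change. -/
lemma leftMove_mk {G : Multiset ℕ} {n : ℕ} (hn : n ∈ G) (i : ℕ) (hi : i + 1 ≤ n) :
    LeftMove G (addStrip (addStrip (G.erase n) i) (n - 1 - i)) ∧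
      phi (addStrip (addStrip (G.erase n) i) (n - 1 - i))
        = phi G - c n + c i + c (n - 1 - i) := by
  refine ⟨⟨n, hn, i, hi, rfl⟩, ?_⟩
  rw [phi_addStrip, phi_addStrip]
  have h1 := phi_erase hn
  omega

lemma rightMove_mk {G : Multiset ℕ} {n : ℕ} (hn : n ∈ G) (i : ℕ) (hi : i + 2 ≤ n) :
    RightMove G (addStrip (addStrip (G.erase n) i) (n - 2 - i)) ∧
      phi (addStrip (addStrip (G.erase n) i) (n - 2 - i))
        = phi G - c n + c i + c (n - 2 - i) := by
  refine ⟨⟨n, hn, i, hi, rfl⟩, ?_⟩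
  rw [phi_addStrip, phi_addStrip]
  have h1 := phi_erase hn
  omega

/-- From any strip of length `≥ 2` there is a Right move raising phi by 1. -/
lemma exists_right_plus_one {G : Multiset ℕ} {n : ℕ} (hn : n ∈ G) (h2 : 2 ≤ n) :
    ∃ G', RightMove G G' ∧ phi G' = phi G + 1 := by
  rcases (show n % 3 = 0 ∨ n % 3 = 1 ∨ n % 3 = 2 by omega) with h | h | h
  · -- n ≡ 0, n ≥ 3 : take i = 0, j = n-2 ≡ 1
    obtain ⟨mv, hφ⟩ := rightMove_mk hn 0 (by omega)
    refine ⟨_, mv, ?_⟩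
    have hc1 : c n = 0 := by unfold c; simp [h]
    have hc2 : c 0 = 0 := rfl
    have hc3 : c (n - 2 - 0) = 1 := by unfold c; split_ifs <;> omega
    omega
  · -- n ≡ 1, n ≥ 4 : take i = 1, j = n-3 ≡ 1
    obtain ⟨mv, hφ⟩ := rightMove_mk hn 1 (by omega)
    refine ⟨_, mv, ?_⟩
    have hc1 : c n = 1 := by unfold c; simp [h]
    have hc2 : c 1 = 1 := rfl
    have hc3 : c (n - 2 - 1) = 1 := by unfold c; split_ifs <;> omega
    omega
  · -- n ≡ 2 : take i = 0, j = n-2 ≡ 0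
    obtain ⟨mv, hφ⟩ := rightMove_mk hn 0 (by omega)
    refine ⟨_, mv, ?_⟩
    have hc1 : c n = -1 := by unfold c; simp [h]
    have hc2 : c 0 = 0 := rfl
    have hc3 : c (n - 2 - 0) = 0 := by unfold c; split_ifs <;> omega
    omega

/-- From a strip with `n % 3 ≠ 2` or `n ≥ 5` there is a Left move lowering phi by 1. -/
lemma exists_left_minus_one {G : Multiset ℕ} {n : ℕ} (hn : n ∈ G) (h1 : 1 ≤ n)
    (h : n % 3 ≠ 2 ∨ 5 ≤ n) :
    ∃ G', LeftMove G G' ∧ phi G' = phi G - 1 := by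
  rcases (show n % 3 = 0 ∨ n % 3 = 1 ∨ n % 3 = 2 by omega) with hm | hm | hm
  · -- n ≡ 0, n ≥ 3 : i = 0, j = n-1 ≡ 2
    obtain ⟨mv, hφ⟩ := leftMove_mk hn 0 (by omega)
    refine ⟨_, mv, ?_⟩
    have hc1 : c n = 0 := by unfold c; simp [hm]
    have hc2 : c 0 = 0 := rfl
    have hc3 : c (n - 1 - 0) = -1 := by
      unfold c; split_ifs <;> omega
    omega
  · -- n ≡ 1 : i = 0, j = n-1 ≡ 0
    obtain ⟨mv, hφ⟩ := leftMove_mk hn 0 (by omega)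
    refine ⟨_, mv, ?_⟩
    have hc1 : c n = 1 := by unfold c; simp [hm]
    have hc2 : c 0 = 0 := rfl
    have hc3 : c (n - 1 - 0) = 0 := by
      unfold c; split_ifs <;> omega
    omega
  · -- n ≡ 2, n ≥ 5 : i = 2, j = n-3 ≡ 2
    have h5 : 5 ≤ n := by rcases h with h | h <;> omega
    obtain ⟨mv, hφ⟩ := leftMove_mk hn 2 (by omega)
    refine ⟨_, mv, ?_⟩
    have hc1 : c n = -1 := by unfold c; simp [hm]
    have hc2 : c 2 = -1 := rfl
    have hc3 : c (n - 1 - 2) = -1 := by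
      unfold c; split_ifs <;> omega
    omega

lemma exists_leftMove {G : Multiset ℕ} (h0 : 0 ∉ G) (hne : G ≠ 0) : ∃ G', LeftMove G G' := by
  obtain ⟨n, hn⟩ := Multiset.exists_mem_of_ne_zero hne
  have h1 : 1 ≤ n := by
    rcases Nat.eq_zero_or_pos n with h | h
    · exact absurd (h ▸ hn) h0
    · exact h
  exact ⟨_, n, hn, 0, by omega, rfl⟩

lemma exists_mod2 {G : Multiset ℕ} (h : phi G < 0) : ∃ n ∈ G, n % 3 = 2 := by
  by_contra hno
  push_neg at hno
  have : 0 ≤ phi G := by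
    apply Multiset.sum_nonneg
    intro x hx
    obtain ⟨n, hn, rfl⟩ := Multiset.mem_map.mp hx
    have := hno n hn
    unfold c; split_ifs <;> omega
  omega

lemma phi_all_two {G : Multiset ℕ} (h : ∀ n ∈ G, n = 2) : phi G = -(G.card : ℤ) := by
  have : G.map c = Multiset.replicate G.card (-1) := by
    rw [Multiset.eq_replicate]
    constructor
    · simp
    · intro b hb
      obtain ⟨n, hn, rfl⟩ := Multiset.mem_map.mp hb
      rw [h n hn]; rfl
  rw [phi, this, Multiset.sum_replicate]
  simp

lemma lwm_zero : LeftWinsMover 0 :=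
  LeftWinsMover.cannot 0 (by rintro ⟨G', n, hn, -⟩; exact absurd hn (Multiset.notMem_zero n))

lemma not_lww_zero : ¬ LeftWinsWaiter 0 := by
  intro h
  cases h with
  | intro _ hex _ =>
      obtain ⟨G', n, hn, -⟩ := hex
      exact absurd hn (Multiset.notMem_zero n)

lemma phi_zero : phi 0 = 0 := rfl

lemma main_nil :
    (LeftWinsMover 0 ↔ (phi 0 ≤ 0 ∧ (3:ℤ) ∣ phi 0)) ∧
    (LeftWinsWaiter 0 ↔ (phi 0 ≤ 0 ∧ (3:ℤ) ∣ (phi 0 + 1))) := by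
  have h : phi 0 = 0 := rfl
  exact ⟨iff_of_true lwm_zero (by rw [h]; omega),
         iff_of_false not_lww_zero (by rw [h]; omega)⟩

lemma main : ∀ (N : ℕ) (G : Multiset ℕ), G.sum ≤ N → 0 ∉ G →
    (LeftWinsMover G ↔ (phi G ≤ 0 ∧ (3:ℤ) ∣ phi G)) ∧
    (LeftWinsWaiter G ↔ (phi G ≤ 0 ∧ (3:ℤ) ∣ (phi G + 1))) := by
  intro N
  induction N with
  | zero =>
      intro G hsum h0
      have hG : G = 0 := by
        by_contra hne
        obtain ⟨n, hn⟩ := Multiset.exists_mem_of_ne_zero hne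
        have h1 : n ≤ G.sum := Multiset.single_le_sum (fun x _ => Nat.zero_le x) n hn
        have h2 : n ≠ 0 := fun h => h0 (h ▸ hn)
        omega
      subst hG
      exact main_nil
  | succ N ih =>
      intro G hsum h0
      by_cases hG : G = 0
      · subst hG; exact main_nil
      constructor
      · constructor
        · intro h
          cases h with
          | cannot _ hno => exact absurd (exists_leftMove h0 hG) hno
          | move _ G' hmv hG' =>
              obtain ⟨h0', hs, hδ⟩ := leftMove_spec h0 hmv
              obtain ⟨hb1, hb2⟩ := (ih G' (by omega) h0').2.mp hG'
              rcases hδ with h | h <;> exact ⟨by omega, by omega⟩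
        · rintro ⟨hle, hdvd⟩
          by_cases hall : ∀ n ∈ G, n % 3 = 2 ∧ n < 5
          · -- every strip is a strip of length 2
            have h2 : ∀ n ∈ G, n = 2 := by
              intro n hn
              have ha := hall n hn
              have : n ≠ 0 := fun h => h0 (h ▸ hn)
              omega
            have hphi := phi_all_two h2
            have hcard : G.card ≠ 0 := fun h => hG (Multiset.card_eq_zero.mp h)
            have hc3 : 3 ≤ (G.card : ℤ) := by
              rw [hphi] at hdvd
              omega
            obtain ⟨n, hn⟩ := Multiset.exists_mem_of_ne_zero hG
            have hn2 : n = 2 := h2 n hn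
            subst hn2
            obtain ⟨mv, hφ'⟩ := leftMove_mk hn 0 (by omega)
            refine LeftWinsMover.move _ _ mv ?_
            obtain ⟨h0', hs, -⟩ := leftMove_spec h0 mv
            refine ((ih _ (by omega) h0').2).mpr ?_
            have hcA : c 2 = -1 := by norm_num [c]
            have hcB : c 0 = 0 := by norm_num [c]
            have hcC : c (2 - 1 - 0) = 1 := by norm_num [c]
            exact ⟨by omega, by omega⟩
          · push_neg at hall
            obtain ⟨n, hn, hprop⟩ := hall
            have h1 : 1 ≤ n := by
              have : n ≠ 0 := fun h => h0 (h ▸ hn)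
              omega
            have hcase : n % 3 ≠ 2 ∨ 5 ≤ n := by
              by_cases hmm : n % 3 = 2
              · exact Or.inr (by have := hprop hmm; omega)
              · exact Or.inl hmm
            obtain ⟨G', mv, hφ'⟩ := exists_left_minus_one hn h1 hcase
            refine LeftWinsMover.move _ _ mv ?_
            obtain ⟨h0', hs, -⟩ := leftMove_spec h0 mv
            exact ((ih _ (by omega) h0').2).mpr ⟨by omega, by omega⟩
      · constructor
        · intro h
          cases h with
          | intro _ hex hall =>
              obtain ⟨G'', n, hn, i, hi, -⟩ := hex
              obtain ⟨G', mv, hφ'⟩ := exists_right_plus_one hn (by omega)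
              have hmm := hall G' mv
              obtain ⟨h0', hs, -⟩ := rightMove_spec h0 mv
              obtain ⟨hb1, hb2⟩ := (ih G' (by omega) h0').1.mp hmm
              exact ⟨by omega, by omega⟩
        · rintro ⟨hle, hdvd⟩
          have hneg : phi G < 0 := by omega
          obtain ⟨n, hn, hn2⟩ := exists_mod2 hneg
          refine LeftWinsWaiter.intro _ ⟨_, n, hn, 0, by omega, rfl⟩ ?_
          intro G' hmv
          obtain ⟨h0', hs, hδ⟩ := rightMove_spec h0 hmv
          refine ((ih G' (by omega) h0').1).mpr ?_
          rcases hδ with h | h <;> exact ⟨by omega, by omega⟩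

open Classical in
noncomputable def F (z : ℤ) : Outcome :=
  if z ≤ 0 ∧ (3:ℤ) ∣ z then Outcome.N
  else if z ≤ 0 ∧ (3:ℤ) ∣ (z + 1) then Outcome.P
  else Outcome.R

lemma outcome_eq {G : Multiset ℕ} (h0 : 0 ∉ G) : outcome G = F (phi G) := by
  obtain ⟨hM, hW⟩ := main G.sum G le_rfl h0
  unfold outcome F
  by_cases hA : phi G ≤ 0 ∧ (3:ℤ) ∣ phi G
  · have h1 : LeftWinsMover G := hM.mpr hA
    have h2 : ¬ LeftWinsWaiter G := by
      intro h
      obtain ⟨b1, b2⟩ := hW.mp h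
      obtain ⟨a1, a2⟩ := hA
      omega
    rw [if_pos h1, if_neg h2, if_pos hA]
  · have h1 : ¬ LeftWinsMover G := fun h => hA (hM.mp h)
    rw [if_neg h1]
    by_cases hB : phi G ≤ 0 ∧ (3:ℤ) ∣ (phi G + 1)
    · rw [if_pos (hW.mpr hB), if_neg hA, if_pos hB]
    · rw [if_neg (fun h => hB (hW.mp h)), if_neg hA, if_neg hB]

lemma F_N {z : ℤ} (h1 : z ≤ 0) (h2 : (3:ℤ) ∣ z) : F z = Outcome.N := by
  unfold F; rw [if_pos ⟨h1, h2⟩]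

lemma F_pos {z : ℤ} (h : 0 < z) : F z = Outcome.R := by
  unfold F
  rw [if_neg (by omega), if_neg (by omega)]

lemma exists_rep (z : ℤ) : ∃ G : Multiset ℕ, 0 ∉ G ∧ phi G = z := by
  rcases le_or_gt 0 z with h | h
  · refine ⟨Multiset.replicate z.toNat 1, ?_, ?_⟩
    · intro hm
      have := Multiset.eq_of_mem_replicate hm
      omega
    · rw [phi, Multiset.map_replicate, Multiset.sum_replicate]
      have hc : c 1 = 1 := rfl
      rw [hc, nsmul_eq_mul, mul_one]
      omega
  · refine ⟨Multiset.replicate (-z).toNat 2, ?_, ?_⟩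
    · intro hm
      have := Multiset.eq_of_mem_replicate hm
      omega
    · rw [phi, Multiset.map_replicate, Multiset.sum_replicate]
      have hc : c 2 = -1 := rfl
      rw [hc]
      rw [nsmul_eq_mul]
      have : ((-z).toNat : ℤ) = -z := by omega
      rw [this]
      ring

end KaylesAux

open KaylesAux in
theorem kayles_monoid_iso_int :
    (∀ G H : Multiset ℕ, kaylesPhi (G + H) = kaylesPhi G + kaylesPhi H) ∧
    (∀ G H : Multiset ℕ, 0 ∉ G → 0 ∉ H →
      ((∀ X : Multiset ℕ, 0 ∉ X → outcome (G + X) = outcome (H + X)) ↔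
        kaylesPhi G = kaylesPhi H)) ∧
    (∀ z : ℤ, ∃ G : Multiset ℕ, 0 ∉ G ∧ kaylesPhi G = z) := by
  refine ⟨?_, ?_, ?_⟩
  · intro G H
    rw [kaylesPhi_eq, kaylesPhi_eq, kaylesPhi_eq, phi_add]
  · intro G H hG hH
    constructor
    · intro h
      by_contra hne
      rw [kaylesPhi_eq, kaylesPhi_eq] at hne
      obtain ⟨X, hX0, hXφ⟩ := exists_rep (-(min (phi G) (phi H)))
      have hGX : 0 ∉ G + X := by rw [Multiset.mem_add]; tauto
      have hHX : 0 ∉ H + X := by rw [Multiset.mem_add]; tauto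
      have key := h X hX0
      rw [outcome_eq hGX, outcome_eq hHX, phi_add, phi_add, hXφ] at key
      rcases le_total (phi G) (phi H) with hab | hab
      · rw [show phi G + -min (phi G) (phi H) = 0 by omega] at key
        rw [F_N le_rfl (dvd_zero 3), F_pos (by omega)] at key
        exact Outcome.noConfusion key
      · rw [show phi H + -min (phi G) (phi H) = 0 by omega] at key
        rw [F_pos (by omega), F_N le_rfl (dvd_zero 3)] at key
        exact Outcome.noConfusion key
    · intro h X hX0
      have hGX : 0 ∉ G + X := by rw [Multiset.mem_add]; tauto
      have hHX : 0 ∉ H + X := by rw [Multiset.mem_add]; tauto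
      rw [kaylesPhi_eq, kaylesPhi_eq] at h
      rw [outcome_eq hGX, outcome_eq hHX, phi_add, phi_add, h]
  · intro z
    obtain ⟨G, h1, h2⟩ := exists_rep z
    exact ⟨G, h1, by rw [kaylesPhi_eq, h2]⟩
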